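/- A function f : [a,b] → ℝ has negligible variation on a set E ⊆ [a,b] if and only if there exists a null set Z ⊆ E such that f has negligible variation on Z and f'(x) = 0 for every x ∈ E \ Z. -/

import Mathlib

open Set MeasureTheory Filter
open scoped Classical

/-- A tagged partition of `[a, b]`: division points `t 0 = a ≤ t 1 ≤ ⋯ ≤ t n = b`
together with tags `tag i ∈ [t i, t (i+1)]`. -/
structure TaggedPartition (a b : ℝ) where
  n : ℕ
  t : ℕ → ℝ
  tag : ℕ → ℝ
  t_first : t 0 = a
  t_last : t n = b
  t_mono : ∀ i < n, t i ≤ t (i + 1)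
  tag_mem : ∀ i < n, tag i ∈ Set.Icc (t i) (t (i + 1))

/-- A tagged partition is subordinate to a gauge `δ` if each interval is contained in the
open ball of radius `δ` around its tag. -/
def TaggedPartition.Subordinate {a b : ℝ} (P : TaggedPartition a b) (δ : ℝ → ℝ) : Prop :=
  ∀ i < P.n,
    Set.Icc (P.t i) (P.t (i + 1)) ⊆ Set.Ioo (P.tag i - δ (P.tag i)) (P.tag i + δ (P.tag i))

/-- A gauge on `[a, b]` is positive on `[a, b]`. -/
def IsGauge (a b : ℝ) (δ : ℝ → ℝ) : Prop := ∀ x ∈ Set.Icc a b, 0 < δ x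

/-- `f` has negligible variation on `E ⊆ [a, b]`. -/

def NegVar (a b : ℝ) (f : ℝ → ℝ) (E : Set ℝ) : Prop :=
  ∀ ε > 0, ∃ δ : ℝ → ℝ, IsGauge a b δ ∧ ∀ P : TaggedPartition a b, P.Subordinate δ →
    (∑ i ∈ Finset.range P.n,
      if P.tag i ∈ E then |f (P.t (i + 1)) - f (P.t i)| else 0) < ε

/-- `f` has negligible conditional variation on `E ⊆ [a, b]`. -/

def NegCondVar (a b : ℝ) (f : ℝ → ℝ) (E : Set ℝ) : Prop :=
  ∀ ε > 0, ∃ δ : ℝ → ℝ, IsGauge a b δ ∧ ∀ P : TaggedPartition a b, P.Subordinate δ →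
    |∑ i ∈ Finset.range P.n,
      if P.tag i ∈ E then f (P.t (i + 1)) - f (P.t i) else 0| < ε

/-- `I` is the Henstock–Kurzweil integral of `h` on `[a, b]` (with `a ≤ b`). -/
def HKIntegralTo (a b : ℝ) (h : ℝ → ℝ) (I : ℝ) : Prop :=
  ∀ ε > 0, ∃ δ : ℝ → ℝ, IsGauge a b δ ∧ ∀ P : TaggedPartition a b, P.Subordinate δ →
    |(∑ i ∈ Finset.range P.n, h (P.tag i) * (P.t (i + 1) - P.t i)) - I| < ε

/-- Oriented HK integral: `(HK)∫_a^b h = I`, with the convention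
`(HK)∫_b^a h = -(HK)∫_a^b h`. -/
def HKIntegral (a b : ℝ) (h : ℝ → ℝ) (I : ℝ) : Prop :=
  if a ≤ b then HKIntegralTo a b h I else HKIntegralTo b a h (-I)

namespace Stmt7Aux

open Set

def triv (c : ℝ) : TaggedPartition c c where
  n := 0
  t := fun _ => c
  tag := fun _ => c
  t_first := rfl
  t_last := rfl
  t_mono := fun i h => absurd h (Nat.not_lt_zero i)
  tag_mem := fun i h => absurd h (Nat.not_lt_zero i)

def single (c d x : ℝ) (h1 : c ≤ x) (h2 : x ≤ d) : TaggedPartition c d where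
  n := 1
  t := fun i => if i = 0 then c else d
  tag := fun _ => x
  t_first := rfl
  t_last := by simp
  t_mono := by
    intro i hi
    have : i = 0 := by omega
    subst this; simpa using h1.trans h2
  tag_mem := by
    intro i hi
    have : i = 0 := by omega
    subst this; simpa using ⟨h1, h2⟩

variable {a b c : ℝ}

def transT (P : TaggedPartition a b) (Q : TaggedPartition b c) : ℕ → ℝ :=
  fun i => if i < P.n then P.t i else Q.t (i - P.n)

def transTag (P : TaggedPartition a b) (Q : TaggedPartition b c) : ℕ → ℝ :=
  fun i => if i < P.n then P.tag i else Q.tag (i - P.n)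

lemma transT_left (P : TaggedPartition a b) (Q : TaggedPartition b c) {i : ℕ} (hi : i ≤ P.n) :
    transT P Q i = P.t i := by
  rcases lt_or_eq_of_le hi with h | h
  · simp [transT, h]
  · subst h
    have h2 : ¬ (P.n < P.n) := lt_irrefl _
    simp [transT, h2, Q.t_first, P.t_last]

lemma transT_right (P : TaggedPartition a b) (Q : TaggedPartition b c) (j : ℕ) :
    transT P Q (P.n + j) = Q.t j := by
  have h2 : ¬ (P.n + j < P.n) := by omega
  simp [transT, h2]

lemma transTag_left (P : TaggedPartition a b) (Q : TaggedPartition b c) {i : ℕ} (hi : i < P.n) :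
    transTag P Q i = P.tag i := by simp [transTag, hi]

lemma transTag_right (P : TaggedPartition a b) (Q : TaggedPartition b c) (j : ℕ) :
    transTag P Q (P.n + j) = Q.tag j := by
  have h2 : ¬ (P.n + j < P.n) := by omega
  simp [transTag, h2]

def trans (P : TaggedPartition a b) (Q : TaggedPartition b c) : TaggedPartition a c where
  n := P.n + Q.n
  t := transT P Q
  tag := transTag P Q
  t_first := by rw [transT_left P Q (Nat.zero_le _), P.t_first]
  t_last := by
    have : P.n + Q.n = P.n + Q.n := rfl
    rw [transT_right P Q Q.n, Q.t_last]
  t_mono := by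
    intro i hi
    by_cases h : i < P.n
    · rw [transT_left P Q h.le, transT_left P Q (by omega : i + 1 ≤ P.n)]
      exact P.t_mono i h
    · obtain ⟨j, rfl⟩ : ∃ j, i = P.n + j := ⟨i - P.n, by omega⟩
      rw [transT_right, show P.n + j + 1 = P.n + (j + 1) from rfl, transT_right]
      exact Q.t_mono j (by omega)
  tag_mem := by
    intro i hi
    by_cases h : i < P.n
    · rw [transT_left P Q h.le, transT_left P Q (by omega : i + 1 ≤ P.n), transTag_left P Q h]
      exact P.tag_mem i h
    · obtain ⟨j, rfl⟩ : ∃ j, i = P.n + j := ⟨i - P.n, by omega⟩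
      rw [transTag_right, transT_right, show P.n + j + 1 = P.n + (j + 1) from rfl, transT_right]
      exact Q.tag_mem j (by omega)

lemma trans_n (P : TaggedPartition a b) (Q : TaggedPartition b c) :
    (trans P Q).n = P.n + Q.n := rfl

lemma subordinate_trans {δ : ℝ → ℝ} {P : TaggedPartition a b} {Q : TaggedPartition b c}
    (hP : P.Subordinate δ) (hQ : Q.Subordinate δ) : (trans P Q).Subordinate δ := by
  intro i hi
  rw [trans_n] at hi
  by_cases h : i < P.n
  · show Set.Icc (transT P Q i) (transT P Q (i + 1)) ⊆
      Set.Ioo (transTag P Q i - δ (transTag P Q i)) (transTag P Q i + δ (transTag P Q i))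
    rw [transT_left P Q h.le, transT_left P Q (by omega : i + 1 ≤ P.n), transTag_left P Q h]
    exact hP i h
  · obtain ⟨j, rfl⟩ : ∃ j, i = P.n + j := ⟨i - P.n, by omega⟩
    show Set.Icc (transT P Q (P.n + j)) (transT P Q (P.n + j + 1)) ⊆
      Set.Ioo (transTag P Q (P.n + j) - δ (transTag P Q (P.n + j)))
        (transTag P Q (P.n + j) + δ (transTag P Q (P.n + j)))
    rw [transT_right, show P.n + j + 1 = P.n + (j + 1) from rfl, transT_right, transTag_right]
    exact hQ j (by omega)

lemma trans_sum (P : TaggedPartition a b) (Q : TaggedPartition b c) (g : ℝ → ℝ → ℝ → ℝ) :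
    (∑ i ∈ Finset.range (trans P Q).n,
        g ((trans P Q).tag i) ((trans P Q).t i) ((trans P Q).t (i + 1))) =
      (∑ i ∈ Finset.range P.n, g (P.tag i) (P.t i) (P.t (i + 1))) +
        ∑ j ∈ Finset.range Q.n, g (Q.tag j) (Q.t j) (Q.t (j + 1)) := by
  rw [trans_n, Finset.sum_range_add]
  congr 1
  · apply Finset.sum_congr rfl
    intro i hi
    rw [Finset.mem_range] at hi
    show g (transTag P Q i) (transT P Q i) (transT P Q (i+1)) = _
    rw [transT_left P Q hi.le, transT_left P Q (by omega : i + 1 ≤ P.n), transTag_left P Q hi]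
  · apply Finset.sum_congr rfl
    intro j hj
    show g (transTag P Q _) (transT P Q _) (transT P Q _) = _
    rw [transTag_right, transT_right, show P.n + j + 1 = P.n + (j + 1) from rfl, transT_right]

lemma single_sum (c d x : ℝ) (h1 : c ≤ x) (h2 : x ≤ d) (g : ℝ → ℝ → ℝ → ℝ) :
    (∑ i ∈ Finset.range (single c d x h1 h2).n,
        g ((single c d x h1 h2).tag i) ((single c d x h1 h2).t i)
          ((single c d x h1 h2).t (i + 1))) = g x c d := by
  simp [single]

lemma t_mem (P : TaggedPartition a b) : ∀ i ≤ P.n, P.t i ∈ Set.Icc a b := by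
  have mono : ∀ j ≤ P.n, ∀ i ≤ j, P.t i ≤ P.t j := by
    intro j
    induction j with
    | zero =>
      intro _ i hi
      have : i = 0 := by omega
      subst this; exact le_rfl
    | succ k ih =>
      intro hk i hi
      rcases Nat.lt_or_ge i (k + 1) with h | h
      · exact (ih (by omega) i (by omega)).trans (P.t_mono k (by omega))
      · have : i = k + 1 := by omega
        subst this; exact le_rfl
  intro i hi
  refine ⟨?_, ?_⟩
  · have h0 := mono i hi 0 (Nat.zero_le _)
    rwa [P.t_first] at h0
  · have h0 := mono P.n le_rfl i hi
    rwa [P.t_last] at h0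

end Stmt7Aux
namespace Stmt7Aux

open Set

lemma cousin (δ : ℝ → ℝ) (c d : ℝ) (hcd : c ≤ d) (hδ : ∀ x ∈ Set.Icc c d, 0 < δ x) :
    ∃ P : TaggedPartition c d, P.Subordinate δ := by
  set S : Set ℝ := {x | x ∈ Set.Icc c d ∧ ∃ P : TaggedPartition c x, P.Subordinate δ} with hS
  have hcS : c ∈ S := ⟨⟨le_rfl, hcd⟩, triv c, fun i h => absurd h (Nat.not_lt_zero i)⟩
  have hne : S.Nonempty := ⟨c, hcS⟩
  have hbdd : BddAbove S := ⟨d, fun x hx => hx.1.2⟩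
  set s := sSup S with hs
  have hsc : c ≤ s := le_csSup hbdd hcS
  have hsd : s ≤ d := csSup_le hne (fun x hx => hx.1.2)
  have hδs : 0 < δ s := hδ s ⟨hsc, hsd⟩
  -- s ∈ S
  have hsS : ∃ P : TaggedPartition c s, P.Subordinate δ := by
    obtain ⟨x, hxS, hxgt⟩ := exists_lt_of_lt_csSup hne (by linarith : s - δ s < s)
    have hxs : x ≤ s := le_csSup hbdd hxS
    obtain ⟨⟨hcx, _⟩, P, hP⟩ := hxS
    refine ⟨trans P (single x s s hxs le_rfl), subordinate_trans hP ?_⟩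
    intro i hi
    simp only [single] at hi
    have : i = 0 := by omega
    subst this
    intro y hy
    simp only [single] at hy
    simp only [single]
    have h1 : x ≤ y := by simpa using hy.1
    have h2 : y ≤ s := by simpa using hy.2
    constructor <;> [linarith; linarith]
  -- s = d
  rcases eq_or_lt_of_le hsd with h | h
  · exact h ▸ hsS
  · exfalso
    obtain ⟨P, hP⟩ := hsS
    set s' := min d (s + δ s / 2) with hs'
    have hss' : s ≤ s' := le_min h.le (by linarith)
    have hs'd : s' ≤ d := min_le_left _ _
    have hs'S : s' ∈ S := by
      refine ⟨⟨hsc.trans hss', hs'd⟩, trans P (single s s' s le_rfl hss'), subordinate_trans hP ?_⟩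
      intro i hi
      simp only [single] at hi
      have : i = 0 := by omega
      subst this
      intro y hy
      simp only [single] at hy ⊢
      have h1 : s ≤ y := by simpa using hy.1
      have h2 : y ≤ s' := by simpa using hy.2
      have h3 : s' ≤ s + δ s / 2 := min_le_right _ _
      constructor <;> [linarith; linarith]
    have : s' ≤ s := le_csSup hbdd hs'S
    have hlt : s < s' := lt_min h (by linarith)
    linarith

end Stmt7Aux
namespace Stmt7Aux

open Set Filter

lemma negVar_mono {a b : ℝ} {f : ℝ → ℝ} {E Z : Set ℝ} (hZE : Z ⊆ E) (h : NegVar a b f E) :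
    NegVar a b f Z := by
  intro ε hε
  obtain ⟨δ, hδ, hsum⟩ := h ε hε
  refine ⟨δ, hδ, fun P hP => lt_of_le_of_lt ?_ (hsum P hP)⟩
  apply Finset.sum_le_sum
  intro i _
  by_cases h : P.tag i ∈ Z
  · rw [if_pos h, if_pos (hZE h)]
  · rw [if_neg h]
    split <;> [exact abs_nonneg _; exact le_rfl]

lemma negVar_union {a b : ℝ} {f : ℝ → ℝ} {S T : Set ℝ}
    (hS : NegVar a b f S) (hT : NegVar a b f T) : NegVar a b f (S ∪ T) := by
  intro ε hε
  obtain ⟨δ1, hδ1, h1⟩ := hS (ε / 2) (by linarith)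
  obtain ⟨δ2, hδ2, h2⟩ := hT (ε / 2) (by linarith)
  refine ⟨fun x => min (δ1 x) (δ2 x), fun x hx => lt_min (hδ1 x hx) (hδ2 x hx), fun P hP => ?_⟩
  have hP1 : P.Subordinate δ1 := by
    intro i hi
    refine (hP i hi).trans (Set.Ioo_subset_Ioo ?_ ?_)
    · have := min_le_left (δ1 (P.tag i)) (δ2 (P.tag i)); linarith
    · have := min_le_left (δ1 (P.tag i)) (δ2 (P.tag i)); linarith
  have hP2 : P.Subordinate δ2 := by
    intro i hi
    refine (hP i hi).trans (Set.Ioo_subset_Ioo ?_ ?_)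
    · have := min_le_right (δ1 (P.tag i)) (δ2 (P.tag i)); linarith
    · have := min_le_right (δ1 (P.tag i)) (δ2 (P.tag i)); linarith
  have hlt := add_lt_add (h1 P hP1) (h2 P hP2)
  have hε2 : ε / 2 + ε / 2 = ε := by ring
  refine lt_of_le_of_lt ?_ (hε2 ▸ hlt)
  rw [← Finset.sum_add_distrib]
  apply Finset.sum_le_sum
  intro i _
  by_cases hs : P.tag i ∈ S
  · rw [if_pos (Set.mem_union_left T hs), if_pos hs]
    have : (0:ℝ) ≤ if P.tag i ∈ T then |f (P.t (i + 1)) - f (P.t i)| else 0 := by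
      split <;> [exact abs_nonneg _; exact le_rfl]
    linarith
  · by_cases ht : P.tag i ∈ T
    · rw [if_pos (Set.mem_union_right S ht), if_neg hs, if_pos ht]; linarith
    · rw [if_neg (by simp [hs, ht]), if_neg hs, if_neg ht]; linarith

lemma negVar_of_deriv_zero {a b : ℝ} (hab : a ≤ b) {f : ℝ → ℝ} {S : Set ℝ}
    (hS : S ⊆ Set.Icc a b)
    (hd : ∀ x ∈ S, HasDerivWithinAt f 0 (Set.Icc a b) x) : NegVar a b f S := by
  intro ε hε
  set ε' := ε / (2 * (b - a) + 1) with hε'def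
  have hba : (0:ℝ) ≤ b - a := by linarith
  have hε' : 0 < ε' := by positivity
  have key : ∀ x ∈ S, ∃ r > 0, ∀ y ∈ Set.Icc a b, |y - x| < r → |f y - f x| ≤ ε' * |y - x| := by
    intro x hx
    have h := hd x hx
    rw [hasDerivWithinAt_iff_tendsto_slope] at h
    have h2 := Metric.tendsto_nhds.1 h ε' hε'
    obtain ⟨r, hr, hball⟩ := Metric.mem_nhdsWithin_iff.1 h2
    refine ⟨r, hr, fun y hy hyr => ?_⟩
    by_cases hxy : y = x
    · simp [hxy, abs_nonneg, mul_nonneg hε'.le (abs_nonneg _)]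
    · have hmem : y ∈ Metric.ball x r ∩ (Set.Icc a b \ {x}) :=
        ⟨by rwa [Metric.mem_ball, Real.dist_eq], hy, hxy⟩
      have h3 : dist (slope f x y) 0 < ε' := hball hmem
      rw [dist_zero_right, Real.norm_eq_abs, slope_def_field, abs_div] at h3
      have hne : (0:ℝ) < |y - x| := abs_pos.2 (sub_ne_zero.2 hxy)
      have := (div_le_iff₀ hne).1 h3.le
      linarith
  choose! r hr hprop using key
  set δ : ℝ → ℝ := fun x => if x ∈ S then r x else 1 with hδdef
  refine ⟨δ, fun x _ => ?_, fun P hP => ?_⟩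
  · by_cases h : x ∈ S
    · simpa [hδdef, h] using hr x h
    · simp [hδdef, h]
  · have hbound : ∀ i < P.n, (if P.tag i ∈ S then |f (P.t (i + 1)) - f (P.t i)| else 0)
        ≤ ε' * (P.t (i + 1) - P.t i) := by
      intro i hi
      have hmono := P.t_mono i hi
      by_cases h : P.tag i ∈ S
      · rw [if_pos h]
        have htag := P.tag_mem i hi
        have hsub := hP i hi
        have h1 : P.t i ∈ Set.Ioo (P.tag i - δ (P.tag i)) (P.tag i + δ (P.tag i)) :=
          hsub ⟨le_rfl, hmono⟩
        have h2 : P.t (i + 1) ∈ Set.Ioo (P.tag i - δ (P.tag i)) (P.tag i + δ (P.tag i)) :=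
          hsub ⟨hmono, le_rfl⟩
        have hδtag : δ (P.tag i) = r (P.tag i) := by simp [hδdef, h]
        have hm1 : P.t i ∈ Set.Icc a b := t_mem P i hi.le
        have hm2 : P.t (i + 1) ∈ Set.Icc a b := t_mem P (i + 1) hi
        have e1 : |P.t i - P.tag i| < r (P.tag i) := by
          rw [abs_lt]; rw [hδtag] at h1; exact ⟨by linarith [h1.1], by linarith [h1.2]⟩
        have e2 : |P.t (i + 1) - P.tag i| < r (P.tag i) := by
          rw [abs_lt]; rw [hδtag] at h2; exact ⟨by linarith [h2.1], by linarith [h2.2]⟩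
        have b1 := hprop (P.tag i) h (P.t i) hm1 e1
        have b2 := hprop (P.tag i) h (P.t (i + 1)) hm2 e2
        have a1 : |P.t i - P.tag i| = P.tag i - P.t i := by
          rw [abs_sub_comm, abs_of_nonneg]; linarith [htag.1]
        have a2 : |P.t (i + 1) - P.tag i| = P.t (i + 1) - P.tag i := by
          rw [abs_of_nonneg]; linarith [htag.2]
        rw [a1] at b1; rw [a2] at b2
        calc |f (P.t (i + 1)) - f (P.t i)|
            ≤ |f (P.t (i + 1)) - f (P.tag i)| + |f (P.tag i) - f (P.t i)| := abs_sub_le _ _ _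
          _ ≤ ε' * (P.t (i + 1) - P.tag i) + ε' * (P.tag i - P.t i) := by
              rw [abs_sub_comm (f (P.tag i))]; exact add_le_add b2 b1
          _ = ε' * (P.t (i + 1) - P.t i) := by ring
      · rw [if_neg h]
        have := mul_nonneg hε'.le (by linarith : (0:ℝ) ≤ P.t (i + 1) - P.t i)
        linarith
    calc (∑ i ∈ Finset.range P.n, if P.tag i ∈ S then |f (P.t (i + 1)) - f (P.t i)| else 0)
        ≤ ∑ i ∈ Finset.range P.n, ε' * (P.t (i + 1) - P.t i) :=
          Finset.sum_le_sum (fun i hi => hbound i (Finset.mem_range.1 hi))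
      _ = ε' * (b - a) := by
          rw [← Finset.mul_sum, Finset.sum_range_sub (fun i => P.t i), P.t_last, P.t_first]
      _ < ε := by
          rw [hε'def]; rw [div_mul_eq_mul_div, div_lt_iff₀ (by linarith)]; nlinarith
lemma sum_ite_nonneg {E : Set ℝ} {f : ℝ → ℝ} {a b : ℝ} (P : TaggedPartition a b) :
    (0:ℝ) ≤ ∑ i ∈ Finset.range P.n, if P.tag i ∈ E then |f (P.t (i + 1)) - f (P.t i)| else 0 :=
  Finset.sum_nonneg fun i _ => by split <;> [exact abs_nonneg _; exact le_rfl]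

lemma build (δ : ℝ → ℝ) (f : ℝ → ℝ) (E : Set ℝ) :
    ∀ n : ℕ, ∀ F : Finset (ℝ × ℝ), F.card ≤ n → ∀ a b : ℝ, a ≤ b → IsGauge a b δ →
    (∀ p ∈ F, a ≤ min p.1 p.2 ∧ max p.1 p.2 ≤ b ∧
      Set.Icc (min p.1 p.2) (max p.1 p.2) ⊆ Set.Ioo (p.1 - δ p.1) (p.1 + δ p.1) ∧ p.1 ∈ E) →
    ((F : Set (ℝ × ℝ)).Pairwise fun p q =>
        Disjoint (Set.Icc (min p.1 p.2) (max p.1 p.2)) (Set.Icc (min q.1 q.2) (max q.1 q.2))) →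
    ∃ P : TaggedPartition a b, P.Subordinate δ ∧
      (∑ p ∈ F, |f (max p.1 p.2) - f (min p.1 p.2)|) ≤
        ∑ i ∈ Finset.range P.n, if P.tag i ∈ E then |f (P.t (i + 1)) - f (P.t i)| else 0 := by
  intro n
  induction n with
  | zero =>
    intro F hF a b hab hg _ _
    have hFe : F = ∅ := Finset.card_eq_zero.1 (Nat.le_zero.1 hF)
    obtain ⟨P, hP⟩ := cousin δ a b hab hg
    exact ⟨P, hP, by rw [hFe, Finset.sum_empty]; exact sum_ite_nonneg P⟩
  | succ k ih =>
    intro F hF a b hab hg hmem hdisj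
    rcases F.eq_empty_or_nonempty with rfl | hne
    · obtain ⟨P, hP⟩ := cousin δ a b hab hg
      exact ⟨P, hP, by rw [Finset.sum_empty]; exact sum_ite_nonneg P⟩
    obtain ⟨p, hpF, hpmax⟩ := F.exists_max_image (fun p => max p.1 p.2) hne
    set u := min p.1 p.2 with hu
    set v := max p.1 p.2 with hv
    obtain ⟨hau, hvb, hsubp, hpE⟩ := hmem p hpF
    have huv : u ≤ v := min_le_max
    -- intervals in the rest lie left of u
    have hleft : ∀ q ∈ F.erase p, max q.1 q.2 ≤ u := by
      intro q hq
      have hqF : q ∈ F := Finset.mem_of_mem_erase hq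
      have hqp : q ≠ p := Finset.ne_of_mem_erase hq
      by_contra hcon
      push_neg at hcon
      have hd := hdisj hqF hpF hqp
      have : (max q.1 q.2) ∈ Set.Icc (min q.1 q.2) (max q.1 q.2) := ⟨min_le_max, le_rfl⟩
      exact Set.disjoint_left.1 hd this ⟨hcon.le, hpmax q hqF⟩
    -- apply IH on [a, u]
    have hcard : (F.erase p).card ≤ k := by
      have := Finset.card_erase_of_mem hpF
      omega
    have hgu : IsGauge a u δ := fun x hx => hg x ⟨hx.1, hx.2.trans (huv.trans hvb)⟩
    obtain ⟨P₁, hP₁, hsum₁⟩ := ih (F.erase p) hcard a u hau hgu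
      (fun q hq => by
        obtain ⟨h1, h2, h3, h4⟩ := hmem q (Finset.mem_of_mem_erase hq)
        exact ⟨h1, hleft q hq, h3, h4⟩)
      (hdisj.mono (by exact_mod_cast Finset.erase_subset p F))
    -- Cousin on [v, b]
    have hgv : IsGauge v b δ := fun x hx => hg x ⟨(hau.trans huv).trans hx.1, hx.2⟩
    obtain ⟨P₃, hP₃⟩ := cousin δ v b hvb hgv
    -- middle single interval
    have hup : u ≤ p.1 := min_le_left _ _
    have hpv : p.1 ≤ v := le_max_left _ _
    set Pm := single u v p.1 hup hpv with hPm
    have hPmsub : Pm.Subordinate δ := by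
      intro i hi
      simp only [single, hPm] at hi ⊢
      have : i = 0 := by omega
      subst this
      intro y hy
      simp only at hy ⊢
      exact hsubp ⟨hy.1, hy.2⟩
    set Q := trans Pm P₃ with hQ
    set P := trans P₁ Q with hPdef
    refine ⟨P, subordinate_trans hP₁ (subordinate_trans hPmsub hP₃), ?_⟩
    set g : ℝ → ℝ → ℝ → ℝ := fun x s t => if x ∈ E then |f t - f s| else 0 with hg'
    have e1 := trans_sum P₁ Q g
    have e2 := trans_sum Pm P₃ g
    have e3 := single_sum u v p.1 hup hpv g
    have hsum : (∑ i ∈ Finset.range P.n, if P.tag i ∈ E then |f (P.t (i + 1)) - f (P.t i)| else 0)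
        = (∑ i ∈ Finset.range P₁.n, if P₁.tag i ∈ E then |f (P₁.t (i + 1)) - f (P₁.t i)| else 0)
          + ((if p.1 ∈ E then |f v - f u| else 0)
            + ∑ i ∈ Finset.range P₃.n, if P₃.tag i ∈ E then |f (P₃.t (i + 1)) - f (P₃.t i)| else 0) := by
      simp only [hg'] at e1 e2 e3
      rw [hPdef] at *
      rw [e1, e2, e3]
    rw [hsum, if_pos hpE]
    have hrest := sum_ite_nonneg (E := E) (f := f) P₃
    have hFsplit : (∑ q ∈ F.erase p, |f (max q.1 q.2) - f (min q.1 q.2)|) + |f v - f u|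
        = ∑ q ∈ F, |f (max q.1 q.2) - f (min q.1 q.2)| := Finset.sum_erase_add F _ hpF
    linarith
def Zm (a b : ℝ) (f : ℝ → ℝ) (E : Set ℝ) (m : ℕ) : Set ℝ :=
  {x | x ∈ E ∧ ∀ r > 0, ∃ y, y ∈ Set.Icc a b ∧ y ≠ x ∧ |y - x| < r ∧
    ((m : ℝ) + 1)⁻¹ * |y - x| < |f y - f x|}

lemma Zm_null {a b : ℝ} (hab : a ≤ b) {f : ℝ → ℝ} {E : Set ℝ} (hE : E ⊆ Set.Icc a b)
    (hNV : NegVar a b f E) (m : ℕ) : MeasureTheory.volume (Zm a b f E m) = 0 := by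
  set c0 : ℝ := ((m : ℝ) + 1)⁻¹ with hc0def
  have hc0 : 0 < c0 := by positivity
  set Z := Zm a b f E m with hZdef
  suffices h : ∀ ε : ℝ, 0 < ε → MeasureTheory.volume Z ≤ ENNReal.ofReal (((m : ℝ) + 1) * ε) by
    by_contra hne
    have hfin : MeasureTheory.volume Z ≠ ⊤ := by
      have := h 1 one_pos
      exact ne_top_of_le_ne_top ENNReal.ofReal_ne_top this
    have hpos : 0 < (MeasureTheory.volume Z).toReal := by
      rw [ENNReal.toReal_pos_iff]
      exact ⟨pos_iff_ne_zero.2 hne, lt_top_iff_ne_top.2 hfin⟩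
    set tv := (MeasureTheory.volume Z).toReal with htv
    have hε : (0:ℝ) < tv / (2 * ((m : ℝ) + 1)) := by positivity
    have h2 := h _ hε
    have h3 : ((m : ℝ) + 1) * (tv / (2 * ((m : ℝ) + 1))) = tv / 2 := by
      field_simp
    rw [h3] at h2
    have h4 : ENNReal.ofReal (tv / 2) < ENNReal.ofReal tv :=
      (ENNReal.ofReal_lt_ofReal_iff hpos).2 (by linarith)
    rw [ENNReal.ofReal_toReal hfin] at h4
    exact absurd (lt_of_le_of_lt h2 h4) (lt_irrefl _)
  intro ε hε
  obtain ⟨δ0, hδ0, hbd⟩ := hNV ε hε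
  set T : Set (ℝ × ℝ) := {p | p.1 ∈ Z ∧ p.2 ∈ Set.Icc a b ∧ p.2 ≠ p.1 ∧
    |p.2 - p.1| < δ0 p.1 ∧ c0 * |p.2 - p.1| < |f p.2 - f p.1|} with hTdef
  have habs_bound : ∀ p : ℝ × ℝ, p.1 - |p.2 - p.1| ≤ min p.1 p.2 ∧
      max p.1 p.2 ≤ p.1 + |p.2 - p.1| := by
    intro p
    have h1 := le_abs_self (p.2 - p.1)
    have h2 := neg_abs_le (p.2 - p.1)
    exact ⟨le_min (by linarith [abs_nonneg (p.2 - p.1)]) (by linarith),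
      max_le (by linarith [abs_nonneg (p.2 - p.1)]) (by linarith)⟩
  obtain ⟨u, huT, hucount, hudisj, hucov⟩ :=
    Vitali.exists_disjoint_covering_ae (μ := MeasureTheory.volume) Z T 6
      (fun p => |p.2 - p.1|) (fun p => p.1)
      (fun p => Set.Icc (min p.1 p.2) (max p.1 p.2))
      (by
        intro p _
        rw [Real.closedBall_eq_Icc]
        exact Set.Icc_subset_Icc (habs_bound p).1 (habs_bound p).2)
      (by
        intro p _
        rw [Real.volume_closedBall, Real.volume_Icc,
          show max p.1 p.2 - min p.1 p.2 = |p.2 - p.1| from max_sub_min_eq_abs p.1 p.2,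
          show (2:ℝ) * (3 * |p.2 - p.1|) = 6 * |p.2 - p.1| by ring,
          ENNReal.ofReal_mul (by norm_num : (0:ℝ) ≤ 6)]
        gcongr
        simp)
      (by
        intro p hp
        rw [interior_Icc]
        exact Set.nonempty_Ioo.2 (min_lt_max.2 (Ne.symm hp.2.2.1)))
      (fun p _ => isClosed_Icc)
      (by
        intro x hx ε' hε'
        have hxE : x ∈ E := hx.1
        have hxI : x ∈ Set.Icc a b := hE hxE
        have hδx : 0 < δ0 x := hδ0 x hxI
        obtain ⟨y, hyI, hyx, hyr, hyf⟩ := hx.2 (min ε' (δ0 x)) (lt_min hε' hδx)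
        exact ⟨(x, y), ⟨hx, hyI, hyx, lt_of_lt_of_le hyr (min_le_right _ _), hyf⟩,
          le_of_lt (lt_of_lt_of_le hyr (min_le_left _ _)), rfl⟩)
  -- bound the total length of the disjoint intervals
  have htsum : (∑' (p : ↑u), MeasureTheory.volume (Set.Icc (min (p : ℝ × ℝ).1 (p : ℝ × ℝ).2)
      (max (p : ℝ × ℝ).1 (p : ℝ × ℝ).2))) ≤ ENNReal.ofReal (((m : ℝ) + 1) * ε) := by
    rw [ENNReal.tsum_eq_iSup_sum]
    apply iSup_le
    intro Fs
    set F : Finset (ℝ × ℝ) := Fs.image Subtype.val with hFdef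
    have hsum_eq : (∑ i ∈ Fs, MeasureTheory.volume (Set.Icc (min (i : ℝ × ℝ).1 (i : ℝ × ℝ).2)
        (max (i : ℝ × ℝ).1 (i : ℝ × ℝ).2))) =
        ∑ q ∈ F, MeasureTheory.volume (Set.Icc (min q.1 q.2) (max q.1 q.2)) := by
      rw [hFdef, Finset.sum_image (fun x _ y _ h => Subtype.val_injective h)]
    rw [hsum_eq]
    have hFu : ∀ q ∈ F, q ∈ u := by
      intro q hq
      rw [hFdef, Finset.mem_image] at hq
      obtain ⟨i, _, rfl⟩ := hq
      exact i.2
    have hFT : ∀ q ∈ F, q ∈ T := fun q hq => huT (hFu q hq)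
    -- build a partition containing these intervals
    obtain ⟨P, hPsub, hPsum⟩ := build δ0 f E F.card F le_rfl a b hab hδ0
      (by
        intro q hq
        obtain ⟨hq1, hq2, hq3, hq4, hq5⟩ := hFT q hq
        have hq1I : q.1 ∈ Set.Icc a b := hE hq1.1
        refine ⟨le_min hq1I.1 hq2.1, max_le hq1I.2 hq2.2, ?_, hq1.1⟩
        intro z hz
        have hb := habs_bound q
        exact ⟨by linarith [hz.1, hb.1], by linarith [hz.2, hb.2]⟩)
      (by
        intro p hp q hq hpq
        exact hudisj (hFu p hp) (hFu q hq) hpq)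
    have hEsum := hbd P hPsub
    have hterm : ∀ q ∈ F, c0 * |q.2 - q.1| ≤ |f (max q.1 q.2) - f (min q.1 q.2)| := by
      intro q hq
      obtain ⟨_, _, _, _, hq5⟩ := hFT q hq
      rcases le_total q.1 q.2 with h | h
      · rw [min_eq_left h, max_eq_right h]
        exact le_of_lt hq5
      · rw [min_eq_right h, max_eq_left h, abs_sub_comm (f q.1)]
        exact le_of_lt hq5
    have hlen : c0 * (∑ q ∈ F, |q.2 - q.1|) ≤ ε := by
      rw [Finset.mul_sum]
      calc (∑ q ∈ F, c0 * |q.2 - q.1|)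
          ≤ ∑ q ∈ F, |f (max q.1 q.2) - f (min q.1 q.2)| := Finset.sum_le_sum hterm
        _ ≤ _ := hPsum
        _ ≤ ε := le_of_lt hEsum
    have hlen2 : (∑ q ∈ F, |q.2 - q.1|) ≤ ((m : ℝ) + 1) * ε := by
      have hmc : c0 * ((m : ℝ) + 1) = 1 := by
        rw [hc0def]; field_simp
      nlinarith [Finset.sum_nonneg (fun q (_ : q ∈ F) => abs_nonneg (q.2 - q.1))]
    calc (∑ q ∈ F, MeasureTheory.volume (Set.Icc (min q.1 q.2) (max q.1 q.2)))
        = ∑ q ∈ F, ENNReal.ofReal |q.2 - q.1| := by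
          apply Finset.sum_congr rfl
          intro q _
          rw [Real.volume_Icc, max_sub_min_eq_abs]
      _ = ENNReal.ofReal (∑ q ∈ F, |q.2 - q.1|) :=
          (ENNReal.ofReal_sum_of_nonneg (fun q _ => abs_nonneg _)).symm
      _ ≤ _ := ENNReal.ofReal_le_ofReal hlen2
  calc MeasureTheory.volume Z
      ≤ MeasureTheory.volume (Z ∩ ⋃ p ∈ u, Set.Icc (min (p:ℝ×ℝ).1 p.2) (max (p:ℝ×ℝ).1 p.2))
        + MeasureTheory.volume (Z \ ⋃ p ∈ u, Set.Icc (min (p:ℝ×ℝ).1 p.2) (max (p:ℝ×ℝ).1 p.2)) :=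
        measure_le_inter_add_diff _ _ _
    _ ≤ MeasureTheory.volume (⋃ p ∈ u, Set.Icc (min (p:ℝ×ℝ).1 p.2) (max (p:ℝ×ℝ).1 p.2)) + 0 := by
        gcongr
        · exact Set.inter_subset_right
        · exact le_of_eq hucov
    _ ≤ _ := by
        rw [add_zero]
        exact le_trans (measure_biUnion_le _ hucount _) htsum

lemma main_null {a b : ℝ} (hab : a ≤ b) {f : ℝ → ℝ} {E : Set ℝ} (hE : E ⊆ Set.Icc a b)
    (hNV : NegVar a b f E) :
    MeasureTheory.volume {x ∈ E | ¬ HasDerivWithinAt f 0 (Set.Icc a b) x} = 0 := by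
  have hsub : {x ∈ E | ¬ HasDerivWithinAt f 0 (Set.Icc a b) x} ⊆ ⋃ m : ℕ, Zm a b f E m := by
    intro x hx
    obtain ⟨hxE, hxd⟩ := hx
    rw [hasDerivWithinAt_iff_tendsto_slope, Metric.tendsto_nhds] at hxd
    push_neg at hxd
    obtain ⟨ε0, hε0, hne⟩ := hxd
    obtain ⟨m, hm⟩ := exists_nat_gt (1 / ε0)
    have hminv : ((m : ℝ) + 1)⁻¹ < ε0 := by
      rw [show ((m : ℝ) + 1)⁻¹ = 1 / ((m : ℝ) + 1) from (one_div _).symm,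
        div_lt_iff₀ (by positivity)]
      have hm1 : 1 / ε0 < (m : ℝ) + 1 := by linarith
      have h1 := (div_lt_iff₀ hε0).1 hm1
      linarith
    refine Set.mem_iUnion.2 ⟨m, hxE, ?_⟩
    intro r hr
    obtain ⟨y, hymem, hy⟩ := (Metric.nhdsWithin_basis_ball.frequently_iff).1 hne r hr
    obtain ⟨hyball, hyIcc, hyx⟩ := hymem
    have hyxne : y ≠ x := hyx
    have habs : 0 < |y - x| := abs_pos.2 (sub_ne_zero.2 hyxne)
    refine ⟨y, hyIcc, hyxne, by rwa [Metric.mem_ball, Real.dist_eq] at hyball, ?_⟩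
    rw [dist_zero_right, Real.norm_eq_abs, slope_def_field, abs_div] at hy
    have h2 : ε0 * |y - x| ≤ |f y - f x| := by
      have := (le_div_iff₀ habs).1 hy
      linarith
    calc ((m : ℝ) + 1)⁻¹ * |y - x| < ε0 * |y - x| :=
          mul_lt_mul_of_pos_right hminv habs
      _ ≤ |f y - f x| := h2
  exact measure_mono_null hsub
    (MeasureTheory.measure_iUnion_null fun m => Zm_null hab hE hNV m)

end Stmt7Aux

/-- `f` has negligible variation on `E` iff there is a null `Z ⊆ E` such that
`f` has negligible variation on `Z` and `f' = 0` on `E \ Z`. -/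
theorem stmt7 (a b : ℝ) (hab : a ≤ b) (f : ℝ → ℝ) (E : Set ℝ) (hE : E ⊆ Set.Icc a b) :
    NegVar a b f E ↔
      ∃ Z : Set ℝ, Z ⊆ E ∧ MeasureTheory.volume Z = 0 ∧ NegVar a b f Z ∧
        ∀ x ∈ E \ Z, HasDerivWithinAt f 0 (Set.Icc a b) x := by
  constructor
  · intro h
    refine ⟨{x ∈ E | ¬ HasDerivWithinAt f 0 (Set.Icc a b) x}, fun x hx => hx.1,
      Stmt7Aux.main_null hab hE h, Stmt7Aux.negVar_mono (fun x hx => hx.1) h, ?_⟩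
    intro x hx
    by_contra hc
    exact hx.2 ⟨hx.1, hc⟩
  · rintro ⟨Z, hZE, hZ0, hZNV, hderiv⟩
    have h2 : NegVar a b f (E \ Z) :=
      Stmt7Aux.negVar_of_deriv_zero hab (fun x hx => hE hx.1) hderiv
    exact Stmt7Aux.negVar_mono
      (fun x hx => by
        by_cases h : x ∈ Z
        · exact Or.inl h
        · exact Or.inr ⟨hx, h⟩)
      (Stmt7Aux.negVar_union hZNV h2)
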